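/- Let K=(AP,W,δ,μ,v0) be a finite Kripke structure, ρ, ρ' be two tracks over K with ρ ∼k ρ', and ρ̄ be a track over K. If (lst(ρ),fst(ρ̄)) ∈ δ, then ρ·ρ̄ ∼k ρ'·ρ̄; and if (lst(ρ̄),fst(ρ)) ∈ δ, then ρ̄·ρ ∼k ρ̄·ρ'. -/

import Mathlib

open Classical

universe u v

structure KripkeStructure (AP : Type u) (W : Type v) where
  delta : W → W → Prop
  leftTotal : ∀ w, ∃ w', delta w w'
  mu : W → Set AP
  init : W

variable {AP : Type u} {W : Type v}

/-- A track over a Kripke structure: a finite sequence of at least two states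
respecting the transition relation. -/
def IsTrack (K : KripkeStructure AP W) (ρ : List W) : Prop :=
  2 ≤ ρ.length ∧ ρ.Chain' K.delta

/-- `σ` is a proper prefix (of length at least 2) of `ρ`, i.e. `σ ∈ Pref(ρ)`. -/
def ProperPrefix (σ ρ : List W) : Prop :=
  σ <+: ρ ∧ σ ≠ ρ ∧ 2 ≤ σ.length

/-- `σ` is a proper suffix (of length at least 2) of `ρ`, i.e. `σ ∈ Suff(ρ)`. -/
def ProperSuffix (σ ρ : List W) : Prop :=
  σ <:+ ρ ∧ σ ≠ ρ ∧ 2 ≤ σ.length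

/-- A descriptor element: (initial state, set of internal states, final state). -/
abbrev DescEl (W : Type v) : Type v := W × Set W × W

noncomputable def headW [Nonempty W] (ρ : List W) : W :=
  ρ.headD (Classical.arbitrary W)

noncomputable def lastW [Nonempty W] (ρ : List W) : W :=
  ρ.getLastD (Classical.arbitrary W)

/-- The set of internal states of a track. -/
def intStates (ρ : List W) : Set W := {w | w ∈ (ρ.drop 1).dropLast}

/-- The descriptor element associated with a track. -/
noncomputable def descEl [Nonempty W] (ρ : List W) : DescEl W :=
  (headW ρ, intStates ρ, lastW ρ)

/-- The type of B_k-descriptors (trees of depth `k` represented hereditarily as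
sets of subtrees, which identifies isomorphic descriptors). -/
def BDesc (W : Type v) : ℕ → Type v
  | 0 => DescEl W
  | k + 1 => DescEl W × Set (BDesc W k)

/-- The B_k-descriptor of a track: the root is labelled by the descriptor element of
the track and, for `k > 0`, the subtrees of the root are exactly (one copy each)
the B_(k-1)-descriptors of the proper prefixes of the track. Two tracks are
k-descriptor equivalent (`ρ ∼k ρ'`) iff `bDesc k ρ = bDesc k ρ'`. -/
noncomputable def bDesc [Nonempty W] : (k : ℕ) → List W → BDesc W k
  | 0, ρ => descEl ρ
  | k + 1, ρ => (descEl ρ, {d | ∃ σ, ProperPrefix σ ρ ∧ d = bDesc k σ})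

section Aux

variable {W : Type v} [Nonempty W]

lemma headW_append (ρ b : List W) (h : ρ ≠ []) : headW (ρ ++ b) = headW ρ := by
  cases ρ with
  | nil => exact absurd rfl h
  | cons a t => rfl

lemma lastW_append (a b : List W) (h : b ≠ []) : lastW (a ++ b) = lastW b := by
  unfold lastW
  rw [List.getLastD_eq_getLast?, List.getLastD_eq_getLast?, List.getLast?_append,
    List.getLast?_eq_getLast h]
  rfl

lemma mem_iff_dropLast_or_getLast (t : List W) (ht : t ≠ []) (w : W) :
    w ∈ t ↔ w ∈ t.dropLast ∨ w = t.getLast ht := by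
  conv_lhs => rw [← List.dropLast_append_getLast ht]
  simp

lemma lastW_cons_getLast (a : W) (t : List W) (ht : t ≠ []) :
    lastW (a :: t) = t.getLast ht := by
  unfold lastW
  rw [List.getLastD_cons, List.getLastD_eq_getLast?, List.getLast?_eq_getLast ht]
  rfl

lemma two_le_ne_nil {ρ : List W} (h : 2 ≤ ρ.length) : ρ ≠ [] := by
  intro e; subst e; simp at h

lemma exists_cons_cons {ρ : List W} (h : 2 ≤ ρ.length) :
    ∃ a t, t ≠ [] ∧ ρ = a :: t := by
  match ρ, h with
  | a :: c :: t, _ => exact ⟨a, c :: t, by simp, rfl⟩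

lemma mem_intStates_append_right (ρ b : List W) (hρ : 2 ≤ ρ.length) (hb : b ≠ []) (w : W) :
    w ∈ intStates (ρ ++ b) ↔ (w ∈ intStates ρ ∨ w = lastW ρ) ∨ w ∈ b.dropLast := by
  obtain ⟨a, t, ht, rfl⟩ := exists_cons_cons hρ
  have h1 : ((a :: t) ++ b).drop 1 = t ++ b := by simp
  have h2 : (t ++ b).dropLast = t ++ b.dropLast := List.dropLast_append_of_ne_nil (l' := t) hb
  have h3 : intStates (a :: t) = {w | w ∈ t.dropLast} := by simp [intStates]
  simp only [intStates, Set.mem_setOf_eq, h1, h2, List.mem_append, h3,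
    lastW_cons_getLast a t ht]
  rw [mem_iff_dropLast_or_getLast t ht w]
  simp

lemma mem_intStates_append_left (ρ b : List W) (hρ : 2 ≤ ρ.length) (hb : b ≠ []) (w : W) :
    w ∈ intStates (b ++ ρ) ↔ w ∈ (b.drop 1) ∨ (w = headW ρ ∨ w ∈ intStates ρ) := by
  have hρne : ρ ≠ [] := two_le_ne_nil hρ
  have h1 : (b ++ ρ).drop 1 = b.drop 1 ++ ρ := by
    cases b with
    | nil => exact absurd rfl hb
    | cons x s => simp
  have h2 : (b.drop 1 ++ ρ).dropLast = b.drop 1 ++ ρ.dropLast :=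
    List.dropLast_append_of_ne_nil (l := ρ) (l' := b.drop 1) hρne
  obtain ⟨a, t, ht, rfl⟩ := exists_cons_cons hρ
  have h3 : (a :: t).dropLast = a :: t.dropLast := by
    cases t with
    | nil => exact absurd rfl ht
    | cons x s => rfl
  simp only [intStates, Set.mem_setOf_eq, h1, h2, List.mem_append, h3, List.mem_cons]
  constructor
  · rintro (h | h | h)
    · exact Or.inl h
    · exact Or.inr (Or.inl (by simpa [headW] using h))
    · exact Or.inr (Or.inr (by simpa using h))
  · rintro (h | h | h)
    · exact Or.inl h
    · exact Or.inr (Or.inl (by simpa [headW] using h))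
    · exact Or.inr (Or.inr (by simpa using h))

lemma descEl_append_right {ρ ρ' : List W} (b : List W) (hρ : 2 ≤ ρ.length)
    (hρ' : 2 ≤ ρ'.length) (hb : b ≠ []) (h : descEl ρ = descEl ρ') :
    descEl (ρ ++ b) = descEl (ρ' ++ b) := by
  have h1 : headW ρ = headW ρ' := congrArg Prod.fst h
  have h2 : intStates ρ = intStates ρ' := congrArg (fun p => p.2.1) h
  have h3 : lastW ρ = lastW ρ' := congrArg (fun p => p.2.2) h
  unfold descEl
  refine congrArg₂ Prod.mk ?_ (congrArg₂ Prod.mk ?_ ?_)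
  · rw [headW_append ρ b (two_le_ne_nil hρ), headW_append ρ' b (two_le_ne_nil hρ'), h1]
  · ext w
    rw [mem_intStates_append_right ρ b hρ hb w, mem_intStates_append_right ρ' b hρ' hb w,
      h3, show intStates ρ = intStates ρ' from h2]
  · rw [lastW_append ρ b hb, lastW_append ρ' b hb]

lemma descEl_append_left {ρ ρ' : List W} (b : List W) (hρ : 2 ≤ ρ.length)
    (hρ' : 2 ≤ ρ'.length) (hb : b ≠ []) (h : descEl ρ = descEl ρ') :
    descEl (b ++ ρ) = descEl (b ++ ρ') := by
  have h1 : headW ρ = headW ρ' := congrArg Prod.fst h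
  have h2 : intStates ρ = intStates ρ' := congrArg (fun p => p.2.1) h
  have h3 : lastW ρ = lastW ρ' := congrArg (fun p => p.2.2) h
  unfold descEl
  refine congrArg₂ Prod.mk ?_ (congrArg₂ Prod.mk ?_ ?_)
  · rw [headW_append b ρ hb, headW_append b ρ' hb]
  · ext w
    rw [mem_intStates_append_left ρ b hρ hb w, mem_intStates_append_left ρ' b hρ' hb w,
      h1, show intStates ρ = intStates ρ' from h2]
  · rw [lastW_append b ρ (two_le_ne_nil hρ), lastW_append b ρ' (two_le_ne_nil hρ'), h3]

lemma descEl_of_bDesc {k : ℕ} {ρ ρ' : List W} (h : bDesc k ρ = bDesc k ρ') :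
    descEl ρ = descEl ρ' := by
  cases k with
  | zero => exact h
  | succ k =>
    have := congrArg (fun d : DescEl W × Set (BDesc W k) => d.1) h
    simpa [bDesc] using this

lemma transfer {k : ℕ} {ρ ρ' : List W} (h : bDesc (k+1) ρ = bDesc (k+1) ρ') :
    ∀ σ, ProperPrefix σ ρ → ∃ σ', ProperPrefix σ' ρ' ∧ bDesc k σ = bDesc k σ' := by
  intro σ hσ
  have h2 : {d | ∃ τ, ProperPrefix τ ρ ∧ d = bDesc k τ}
      = {d | ∃ τ, ProperPrefix τ ρ' ∧ d = bDesc k τ} := by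
    have := congrArg (fun d : DescEl W × Set (BDesc W k) => d.2) h
    simpa [bDesc] using this
  have hm : bDesc k σ ∈ {d | ∃ τ, ProperPrefix τ ρ ∧ d = bDesc k τ} := ⟨σ, hσ, rfl⟩
  rw [h2] at hm
  obtain ⟨σ', hσ', he⟩ := hm
  exact ⟨σ', hσ', he⟩

lemma bDesc_mono : ∀ (k : ℕ) {ρ ρ' : List W},
    bDesc (k+1) ρ = bDesc (k+1) ρ' → bDesc k ρ = bDesc k ρ' := by
  intro k
  induction k with
  | zero => intro ρ ρ' h; exact descEl_of_bDesc h
  | succ k IH =>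
    intro ρ ρ' h
    have half : ∀ {a b : List W}, bDesc (k+2) a = bDesc (k+2) b →
        {d | ∃ σ, ProperPrefix σ a ∧ d = bDesc k σ}
          ⊆ {d | ∃ σ, ProperPrefix σ b ∧ d = bDesc k σ} := by
      rintro a b hab d ⟨σ, hσ, rfl⟩
      obtain ⟨σ', h1, h2⟩ := transfer hab σ hσ
      exact ⟨σ', h1, IH h2⟩
    show (descEl ρ, {d | ∃ σ, ProperPrefix σ ρ ∧ d = bDesc k σ})
      = (descEl ρ', {d | ∃ σ, ProperPrefix σ ρ' ∧ d = bDesc k σ})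
    exact congrArg₂ Prod.mk (descEl_of_bDesc h)
      (Set.Subset.antisymm (half h) (half h.symm))

lemma aux_extension : ∀ (k : ℕ) (ρ ρ' b : List W), 2 ≤ ρ.length → 2 ≤ ρ'.length → b ≠ [] →
    bDesc k ρ = bDesc k ρ' →
    bDesc k (ρ ++ b) = bDesc k (ρ' ++ b) ∧ bDesc k (b ++ ρ) = bDesc k (b ++ ρ') := by
  intro k
  induction k with
  | zero =>
    intro ρ ρ' b hρ hρ' hb h
    exact ⟨descEl_append_right b hρ hρ' hb h, descEl_append_left b hρ hρ' hb h⟩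
  | succ k IH =>
    intro ρ ρ' b hρ hρ' hb h
    have hde : descEl ρ = descEl ρ' := descEl_of_bDesc h
    have hk : bDesc k ρ = bDesc k ρ' := bDesc_mono k h
    have hhead : headW ρ = headW ρ' := congrArg Prod.fst hde
    have hblen : 0 < b.length := List.length_pos_iff.mpr hb
    -- right-extension subsets
    have right : ∀ (x y : List W), 2 ≤ x.length → 2 ≤ y.length →
        bDesc k x = bDesc k y →
        (∀ σ, ProperPrefix σ x → ∃ σ', ProperPrefix σ' y ∧ bDesc k σ = bDesc k σ') →
        {d | ∃ σ, ProperPrefix σ (x ++ b) ∧ d = bDesc k σ}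
          ⊆ {d | ∃ σ, ProperPrefix σ (y ++ b) ∧ d = bDesc k σ} := by
      rintro x y hx hy hxy htr d ⟨σ, ⟨hpre, hne, hlen⟩, rfl⟩
      by_cases hcase : σ.length ≤ x.length
      · have hσx : σ <+: x :=
          List.prefix_of_prefix_length_le hpre (List.prefix_append x b) hcase
        by_cases hσeq : σ = x
        · subst hσeq
          refine ⟨y, ⟨List.prefix_append y b, ?_, hy⟩, hxy⟩
          exact fun e => hb (List.self_eq_append_right.mp e)
        · obtain ⟨σ', ⟨hp', hne', hlen'⟩, he'⟩ := htr σ ⟨hσx, hσeq, hlen⟩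
          refine ⟨σ', ⟨hp'.trans (List.prefix_append y b), ?_, hlen'⟩, he'⟩
          intro e
          have := hp'.length_le
          have := congrArg List.length e
          simp at this
          omega
      · push_neg at hcase
        have hxσ : x <+: σ :=
          List.prefix_of_prefix_length_le (List.prefix_append x b) hpre (le_of_lt hcase)
        obtain ⟨τ, rfl⟩ := hxσ
        have hτ : τ <+: b := (List.prefix_append_right_inj x).mp hpre
        have hτne : τ ≠ [] := by rintro rfl; simp at hcase
        have hτneb : τ ≠ b := fun e => hne (by rw [e])
        refine ⟨y ++ τ, ⟨(List.prefix_append_right_inj y).mpr hτ,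
          fun e => hτneb (List.append_cancel_left e), ?_⟩, (IH x y τ hx hy hτne hxy).1⟩
        simp only [List.length_append]
        omega
    -- left-extension subsets
    have left : ∀ (x y : List W), 2 ≤ x.length → 2 ≤ y.length →
        headW x = headW y →
        (∀ σ, ProperPrefix σ x → ∃ σ', ProperPrefix σ' y ∧ bDesc k σ = bDesc k σ') →
        {d | ∃ σ, ProperPrefix σ (b ++ x) ∧ d = bDesc k σ}
          ⊆ {d | ∃ σ, ProperPrefix σ (b ++ y) ∧ d = bDesc k σ} := by
      rintro x y hx hy hhxy htr d ⟨σ, ⟨hpre, hne, hlen⟩, rfl⟩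
      by_cases hcase : σ.length ≤ b.length
      · have hσb : σ <+: b :=
          List.prefix_of_prefix_length_le hpre (List.prefix_append b x) hcase
        refine ⟨σ, ⟨hσb.trans (List.prefix_append b y), ?_, hlen⟩, rfl⟩
        intro e
        have := congrArg List.length e
        simp at this
        omega
      · push_neg at hcase
        have hbσ : b <+: σ :=
          List.prefix_of_prefix_length_le (List.prefix_append b x) hpre (le_of_lt hcase)
        obtain ⟨τ, rfl⟩ := hbσ
        have hτ : τ <+: x := (List.prefix_append_right_inj b).mp hpre
        have hτne : τ ≠ [] := by rintro rfl; simp at hcase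
        have hτnex : τ ≠ x := fun e => hne (by rw [e])
        by_cases hτlen : 2 ≤ τ.length
        · obtain ⟨τ', ⟨hp', hne', hlen'⟩, he'⟩ := htr τ ⟨hτ, hτnex, hτlen⟩
          refine ⟨b ++ τ', ⟨(List.prefix_append_right_inj b).mpr hp',
            fun e => hne' (List.append_cancel_left e), ?_⟩,
            (IH τ τ' b hτlen hlen' hb he').2⟩
          simp only [List.length_append]
          omega
        · -- τ has length 1, so τ = [headW x] = [headW y]
          have hτ1 : τ.length = 1 := by
            have := List.length_pos_iff.mpr hτne
            omega
          have htake : ∀ (z : List W), 2 ≤ z.length → z.take 1 = [headW z] := by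
            intro z hz
            obtain ⟨a, t, ht, rfl⟩ := exists_cons_cons hz
            rfl
          have hτeq : τ = x.take 1 := by
            rw [← hτ1]; exact List.prefix_iff_eq_take.mp hτ
          have hτy : τ <+: y := by
            rw [hτeq, htake x hx, hhxy, ← htake y hy]
            exact List.take_prefix 1 y
          refine ⟨b ++ τ, ⟨(List.prefix_append_right_inj b).mpr hτy, ?_, hlen⟩, rfl⟩
          intro e
          have := congrArg List.length e
          simp [hτ1] at this
          omega
    have htr := transfer h
    have htr' := transfer h.symm
    constructor
    · show (descEl (ρ ++ b), {d | ∃ σ, ProperPrefix σ (ρ ++ b) ∧ d = bDesc k σ})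
        = (descEl (ρ' ++ b), {d | ∃ σ, ProperPrefix σ (ρ' ++ b) ∧ d = bDesc k σ})
      exact congrArg₂ Prod.mk (descEl_append_right b hρ hρ' hb hde)
        (Set.Subset.antisymm (right ρ ρ' hρ hρ' hk htr) (right ρ' ρ hρ' hρ hk.symm htr'))
    · show (descEl (b ++ ρ), {d | ∃ σ, ProperPrefix σ (b ++ ρ) ∧ d = bDesc k σ})
        = (descEl (b ++ ρ'), {d | ∃ σ, ProperPrefix σ (b ++ ρ') ∧ d = bDesc k σ})
      exact congrArg₂ Prod.mk (descEl_append_left b hρ hρ' hb hde)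
        (Set.Subset.antisymm (left ρ ρ' hρ hρ' hhead htr) (left ρ' ρ hρ' hρ hhead.symm htr'))

end Aux

/-- left and right extensions preserve k-descriptor equivalence. -/
theorem extension_bDesc [Fintype W] [Nonempty W] (K : KripkeStructure AP W) (k : ℕ)
    (ρ ρ' ρbar : List W)
    (hρ : IsTrack K ρ) (hρ' : IsTrack K ρ') (hbar : IsTrack K ρbar)
    (he : bDesc k ρ = bDesc k ρ') :
    (K.delta (lastW ρ) (headW ρbar) → bDesc k (ρ ++ ρbar) = bDesc k (ρ' ++ ρbar)) ∧
    (K.delta (lastW ρbar) (headW ρ) → bDesc k (ρbar ++ ρ) = bDesc k (ρbar ++ ρ')) := by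
  have hb : ρbar ≠ [] := two_le_ne_nil hbar.1
  have h := aux_extension k ρ ρ' ρbar hρ.1 hρ'.1 hb he
  exact ⟨fun _ => h.1, fun _ => h.2⟩
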